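/- Let r ≥ 3. Then the set of weight-lattice points contained in the root polytope, M ∩ Δ, equals {0} ∪ {ε e_i + δ e_j : i ≠ j, ε, δ ∈ {1, −1}} ∪ {e_i, −e_i : 1 ≤ i ≤ r} ∪ H, where H = {(ε_1 e_1 + ⋯ + ε_r e_r)/2 : ε_1, …, ε_r ∈ {1, −1}} if r ∈ {3, 4} and H = ∅ if r ≥ 5. -/

import Mathlib

noncomputable section

/-- The standard basis vector `e i` of `ℝ^r`. -/
def b (r : ℕ) (i : Fin r) : Fin r → ℝ := Pi.single i 1

/-- The roots spanning the root polytope of types `B_r`/`D_r`: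
the `2r(r-1)` vectors `±e_i ± e_j` for `i ≠ j`. -/
def rootsBD (r : ℕ) : Set (Fin r → ℝ) :=
  {v | ∃ (i j : Fin r) (ε δ : ℝ), i ≠ j ∧ (ε = 1 ∨ ε = -1) ∧ (δ = 1 ∨ δ = -1) ∧
    v = ε • b r i + δ • b r j}

/-- The root polytope of types `B_r`/`D_r`. -/
def DeltaBD (r : ℕ) : Set (Fin r → ℝ) := convexHull ℝ (rootsBD r)

/-- The weight lattice `M = ℤ^r + ℤ·(1/2, …, 1/2)`. -/
def MBD (r : ℕ) : AddSubgroup (Fin r → ℝ) :=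
  AddSubgroup.closure ({v | ∃ i : Fin r, v = b r i} ∪ {fun _ => (1 / 2 : ℝ)})

lemma sum_single (r : ℕ) (f : Fin r → ℝ) : ∑ i, f i • b r i = f := by
  funext j
  simp [b, Pi.single_apply, Finset.sum_apply, mul_comm]

def SG (r : ℕ) : AddSubgroup (Fin r → ℝ) where
  carrier := {x | (∀ i, ∃ n : ℤ, x i = n) ∨ (∀ i, ∃ n : ℤ, x i = n + 1/2)}
  zero_mem' := Or.inl fun i => ⟨0, by simp⟩
  add_mem' := by
    rintro x y (hx | hx) (hy | hy)
    · exact Or.inl fun i => by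
        obtain ⟨n, hn⟩ := hx i; obtain ⟨m, hm⟩ := hy i
        exact ⟨n + m, by simp [hn, hm]⟩
    · exact Or.inr fun i => by
        obtain ⟨n, hn⟩ := hx i; obtain ⟨m, hm⟩ := hy i
        exact ⟨n + m, by push_cast [Pi.add_apply, hn, hm]; ring⟩
    · exact Or.inr fun i => by
        obtain ⟨n, hn⟩ := hx i; obtain ⟨m, hm⟩ := hy i
        exact ⟨n + m, by push_cast [Pi.add_apply, hn, hm]; ring⟩
    · exact Or.inl fun i => by
        obtain ⟨n, hn⟩ := hx i; obtain ⟨m, hm⟩ := hy i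
        exact ⟨n + m + 1, by push_cast [Pi.add_apply, hn, hm]; ring⟩
  neg_mem' := by
    rintro x (hx | hx)
    · exact Or.inl fun i => by
        obtain ⟨n, hn⟩ := hx i; exact ⟨-n, by simp [hn]⟩
    · exact Or.inr fun i => by
        obtain ⟨n, hn⟩ := hx i
        exact ⟨-n - 1, by push_cast [Pi.neg_apply, hn]; ring⟩

lemma int_mem (r : ℕ) (x : Fin r → ℝ) (hx : ∀ i, ∃ n : ℤ, x i = n) : x ∈ MBD r := by
  choose n hn using hx
  have : x = ∑ i, ((n i : ℝ)) • b r i := by rw [sum_single]; funext i; exact hn i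
  rw [this]
  refine AddSubgroup.sum_mem _ fun i _ => ?_
  have hb : b r i ∈ MBD r := AddSubgroup.subset_closure (Or.inl ⟨i, rfl⟩)
  rw [Int.cast_smul_eq_zsmul]
  exact AddSubgroup.zsmul_mem _ hb (n i)

lemma mem_MBD_iff (r : ℕ) (x : Fin r → ℝ) :
    x ∈ MBD r ↔ (∀ i, ∃ n : ℤ, x i = n) ∨ (∀ i, ∃ n : ℤ, x i = n + 1/2) := by
  constructor
  · intro hx
    have : MBD r ≤ SG r := by
      rw [MBD, AddSubgroup.closure_le]
      rintro v (⟨i, rfl⟩ | rfl)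
      · exact Or.inl fun j => ⟨if j = i then 1 else 0, by
          simp [b, Pi.single_apply]⟩
      · exact Or.inr fun j => ⟨0, by norm_num⟩
    exact this hx
  · rintro (hx | hx)
    · exact int_mem r x hx
    · have h2 : x - (fun _ => (1/2 : ℝ)) ∈ MBD r := by
        refine int_mem r _ fun i => ?_
        obtain ⟨n, hn⟩ := hx i
        exact ⟨n, by simp [hn]⟩
      have hh : (fun _ => (1/2 : ℝ)) ∈ MBD r :=
        AddSubgroup.subset_closure (Or.inr rfl)
      simpa using AddSubgroup.add_mem _ h2 hh

lemma delta_bound (r : ℕ) : DeltaBD r ⊆ {x | ∑ i, |x i| ≤ 2 ∧ ∀ i, |x i| ≤ 1} := by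
  apply convexHull_min
  · rintro v ⟨i, j, ε, δ, hij, hε, hδ, rfl⟩
    have habs : ∀ k, |(ε • b r i + δ • b r j) k| ≤ b r i k + b r j k := by
      intro k
      have : (ε • b r i + δ • b r j) k = ε * b r i k + δ * b r j k := rfl
      rw [this]
      calc |ε * b r i k + δ * b r j k|
          ≤ |ε * b r i k| + |δ * b r j k| := abs_add_le _ _
        _ = b r i k + b r j k := by
            rw [abs_mul, abs_mul]; unfold b
            rcases hε with rfl | rfl <;> rcases hδ with rfl | rfl <;>
              simp [abs_of_nonneg, Pi.single_apply] <;> split <;> split <;> norm_num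
    constructor
    · calc ∑ k, |(ε • b r i + δ • b r j) k|
          ≤ ∑ k, (b r i k + b r j k) :=
            Finset.sum_le_sum fun k _ => habs k
        _ = 2 := by unfold b; rw [Finset.sum_add_distrib]; simp; norm_num
    · intro k
      refine (habs k).trans ?_
      rcases eq_or_ne k i with rfl | hki
      · unfold b; simp [Pi.single_apply, Ne.symm hij]
      · rcases eq_or_ne k j with rfl | hkj
        · unfold b; simp [Pi.single_apply, hki]
        · unfold b; simp [Pi.single_apply, hki, hkj]
  · intro x hx y hy a bb ha hb hab
    constructor
    · calc ∑ k, |(a • x + bb • y) k| ≤ ∑ k, (a * |x k| + bb * |y k|) := by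
            refine Finset.sum_le_sum fun k _ => ?_
            calc |(a • x + bb • y) k| = |a * x k + bb * y k| := rfl
              _ ≤ |a * x k| + |bb * y k| := abs_add_le _ _
              _ = a * |x k| + bb * |y k| := by
                  rw [abs_mul, abs_mul, abs_of_nonneg ha, abs_of_nonneg hb]
        _ = a * ∑ k, |x k| + bb * ∑ k, |y k| := by
            rw [Finset.sum_add_distrib, Finset.mul_sum, Finset.mul_sum]
        _ ≤ a * 2 + bb * 2 := by
            gcongr
            exacts [hx.1, hy.1]
        _ = 2 := by linarith
    · intro k
      calc |(a • x + bb • y) k| = |a * x k + bb * y k| := rfl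
        _ ≤ |a * x k| + |bb * y k| := abs_add_le _ _
        _ = a * |x k| + bb * |y k| := by
            rw [abs_mul, abs_mul, abs_of_nonneg ha, abs_of_nonneg hb]
        _ ≤ a * 1 + bb * 1 := by gcongr; exacts [hx.2 k, hy.2 k]
        _ = 1 := by linarith

lemma root_mem (r : ℕ) (i j : Fin r) (ε δ : ℝ) (hij : i ≠ j) (hε : ε = 1 ∨ ε = -1)
    (hδ : δ = 1 ∨ δ = -1) : ε • b r i + δ • b r j ∈ DeltaBD r :=
  subset_convexHull ℝ _ ⟨i, j, ε, δ, hij, hε, hδ, rfl⟩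

lemma conv : ∀ r : ℕ, Convex ℝ (DeltaBD r) := fun r => convex_convexHull ℝ _

lemma ei_mem (r : ℕ) (hr : 2 ≤ r) (i : Fin r) (ε : ℝ) (hε : ε = 1 ∨ ε = -1) :
    ε • b r i ∈ DeltaBD r := by
  obtain ⟨j, hj⟩ : ∃ j : Fin r, j ≠ i := by
    rcases eq_or_ne i ⟨0, by omega⟩ with rfl | h
    · exact ⟨⟨1, by omega⟩, by simp [Fin.ext_iff]⟩
    · exact ⟨⟨0, by omega⟩, Ne.symm h⟩
  have h1 := root_mem r i j ε 1 (Ne.symm hj) hε (Or.inl rfl)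
  have h2 := root_mem r i j ε (-1) (Ne.symm hj) hε (Or.inr rfl)
  have := conv r h1 h2 (by norm_num : (0:ℝ) ≤ 1/2) (by norm_num : (0:ℝ) ≤ 1/2) (by norm_num)
  convert this using 1
  module

lemma zero_mem_delta (r : ℕ) (hr : 2 ≤ r) : (0 : Fin r → ℝ) ∈ DeltaBD r := by
  have h1 := ei_mem r hr ⟨0, by omega⟩ 1 (Or.inl rfl)
  have h2 := ei_mem r hr ⟨0, by omega⟩ (-1) (Or.inr rfl)
  have := conv r h1 h2 (by norm_num : (0:ℝ) ≤ 1/2) (by norm_num : (0:ℝ) ≤ 1/2) (by norm_num)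
  convert this using 1
  module

lemma half3 (ε : Fin 3 → ℝ) (hε : ∀ i, ε i = 1 ∨ ε i = -1) :
    (1/2 : ℝ) • ∑ i, ε i • b 3 i ∈ DeltaBD 3 := by
  have r01 := root_mem 3 0 1 (ε 0) (ε 1) (by decide) (hε 0) (hε 1)
  have r12 := root_mem 3 1 2 (ε 1) (ε 2) (by decide) (hε 1) (hε 2)
  have r02 := root_mem 3 0 2 (ε 0) (ε 2) (by decide) (hε 0) (hε 2)
  have hw := conv 3 r01 r12 (by norm_num : (0:ℝ) ≤ 1/2) (by norm_num : (0:ℝ) ≤ 1/2) (by norm_num)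
  have hz := conv 3 hw r02 (by norm_num : (0:ℝ) ≤ 2/3) (by norm_num : (0:ℝ) ≤ 1/3) (by norm_num)
  have h0 := zero_mem_delta 3 (by norm_num)
  have hx := conv 3 hz h0 (by norm_num : (0:ℝ) ≤ 3/4) (by norm_num : (0:ℝ) ≤ 1/4) (by norm_num)
  convert hx using 1
  rw [Fin.sum_univ_three]
  module

lemma half4 (ε : Fin 4 → ℝ) (hε : ∀ i, ε i = 1 ∨ ε i = -1) :
    (1/2 : ℝ) • ∑ i, ε i • b 4 i ∈ DeltaBD 4 := by
  have r01 := root_mem 4 0 1 (ε 0) (ε 1) (by decide) (hε 0) (hε 1)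
  have r23 := root_mem 4 2 3 (ε 2) (ε 3) (by decide) (hε 2) (hε 3)
  have hx := conv 4 r01 r23 (by norm_num : (0:ℝ) ≤ 1/2) (by norm_num : (0:ℝ) ≤ 1/2) (by norm_num)
  convert hx using 1
  rw [Fin.sum_univ_four]
  module

lemma int_case (r : ℕ) (x : Fin r → ℝ) (hint : ∀ i, ∃ n : ℤ, x i = n)
    (hs : ∑ i, |x i| ≤ 2) (hb1 : ∀ i, |x i| ≤ 1) :
    x = 0 ∨ x ∈ rootsBD r ∨ ∃ i, x = b r i ∨ x = -b r i := by
  have hval : ∀ i, x i = 1 ∨ x i = 0 ∨ x i = -1 := by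
    intro i
    obtain ⟨n, hn⟩ := hint i
    have h1 : |(n : ℝ)| ≤ 1 := hn ▸ hb1 i
    have h2 : |n| ≤ 1 := by exact_mod_cast (by rwa [← Int.cast_abs] at h1 : ((|n| : ℤ) : ℝ) ≤ 1)
    have : n = 1 ∨ n = 0 ∨ n = -1 := by rw [abs_le] at h2; omega
    rcases this with rfl | rfl | rfl <;> simp [hn]
  have key : ∀ i j k : Fin r, i ≠ j → i ≠ k → j ≠ k → |x i| + |x j| + |x k| ≤ 2 := by
    intro i j k hij hik hjk
    have h1 : ∑ l ∈ ({i, j, k} : Finset (Fin r)), |x l| ≤ ∑ l, |x l| :=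
      Finset.sum_le_sum_of_subset_of_nonneg (Finset.subset_univ _) fun l _ _ => abs_nonneg _
    rw [Finset.sum_insert (by simp [hij, hik]), Finset.sum_insert (by simp [hjk]),
      Finset.sum_singleton] at h1
    linarith
  have habs1 : ∀ i, x i ≠ 0 → |x i| = 1 := by
    intro i hi
    rcases hval i with h | h | h
    · simp [h]
    · exact absurd h hi
    · simp [h]
  by_cases h0 : ∀ i, x i = 0
  · left; funext i; exact h0 i
  push_neg at h0
  obtain ⟨i, hi⟩ := h0
  by_cases h1 : ∀ j, j ≠ i → x j = 0
  · right; right; refine ⟨i, ?_⟩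
    rcases hval i with h | h | h
    · left; funext k
      rcases eq_or_ne k i with rfl | hk
      · simp [b, h]
      · simp [b, Pi.single_apply, hk, h1 k hk]
    · exact absurd h hi
    · right; funext k
      rcases eq_or_ne k i with rfl | hk
      · simp [b, h]
      · simp [b, Pi.single_apply, hk, h1 k hk]
  · push_neg at h1
    obtain ⟨j, hji, hj⟩ := h1
    have hzero : ∀ k, k ≠ i → k ≠ j → x k = 0 := by
      intro k hki hkj
      by_contra hk
      have := key i j k (Ne.symm hji) (Ne.symm hki) (Ne.symm hkj)
      rw [habs1 i hi, habs1 j hj, habs1 k hk] at this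
      linarith
    right; left
    refine ⟨i, j, x i, x j, Ne.symm hji, ?_, ?_, ?_⟩
    · rcases hval i with h | h | h
      · exact Or.inl h
      · exact absurd h hi
      · exact Or.inr h
    · rcases hval j with h | h | h
      · exact Or.inl h
      · exact absurd h hj
      · exact Or.inr h
    · funext k
      have : (x i • b r i + x j • b r j) k = x i * b r i k + x j * b r j k := rfl
      rw [this]; unfold b
      rcases eq_or_ne k i with rfl | hki
      · simp [Pi.single_apply, Ne.symm hji]
      · rcases eq_or_ne k j with rfl | hkj
        · simp [Pi.single_apply, hki]
        · simp [Pi.single_apply, hki, hkj, hzero k hki hkj]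

lemma smul_b_mem_M (r : ℕ) (i : Fin r) (ε : ℝ) (hε : ε = 1 ∨ ε = -1) :
    ε • b r i ∈ MBD r := by
  have hb : b r i ∈ MBD r := AddSubgroup.subset_closure (Or.inl ⟨i, rfl⟩)
  rcases hε with rfl | rfl
  · simpa using hb
  · rw [neg_smul, one_smul]
    exact AddSubgroup.neg_mem _ hb

theorem stmt2 (r : ℕ) (hr : 3 ≤ r) :
    (MBD r : Set (Fin r → ℝ)) ∩ DeltaBD r =
      {0} ∪ rootsBD r ∪ {v | ∃ i : Fin r, v = b r i ∨ v = -b r i} ∪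
        (if r = 3 ∨ r = 4 then
          {v | ∃ ε : Fin r → ℝ, (∀ i, ε i = 1 ∨ ε i = -1) ∧
            v = (1 / 2 : ℝ) • ∑ i, ε i • b r i}
        else ∅) := by
  ext x
  simp only [Set.mem_inter_iff, Set.mem_union, Set.mem_singleton_iff, SetLike.mem_coe]
  constructor
  · rintro ⟨hM, hD⟩
    obtain ⟨hs, hb1⟩ := delta_bound r hD
    rcases (mem_MBD_iff r x).1 hM with hint | hhalf
    · rcases int_case r x hint hs hb1 with h | h | h
      · exact Or.inl (Or.inl (Or.inl h))
      · exact Or.inl (Or.inl (Or.inr h))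
      · exact Or.inl (Or.inr h)
    · have hx : ∀ i, x i = 1/2 ∨ x i = -(1/2) := by
        intro i
        obtain ⟨n, hn⟩ := hhalf i
        have h1 : |(n : ℝ) + 1/2| ≤ 1 := hn ▸ hb1 i
        rw [abs_le] at h1
        have hn1 : (n : ℝ) < 1 := by linarith
        have hn2 : (-2 : ℝ) < n := by linarith
        have hn1' : n < 1 := by exact_mod_cast hn1
        have hn2' : -2 < n := by exact_mod_cast hn2
        have : n = 0 ∨ n = -1 := by omega
        rcases this with rfl | rfl
        · left; rw [hn]; norm_num
        · right; rw [hn]; norm_num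
      have habs : ∀ i, |x i| = 1/2 := by
        intro i
        rcases hx i with h | h <;> rw [h] <;> norm_num
      have hsum : (r : ℝ) * (1/2) ≤ 2 := by
        calc (r : ℝ) * (1/2) = ∑ i : Fin r, |x i| := by
              rw [Finset.sum_congr rfl fun i _ => habs i, Finset.sum_const,
                Finset.card_univ, Fintype.card_fin, nsmul_eq_mul]
          _ ≤ 2 := hs
      have hr4 : r ≤ 4 := by
        by_contra h
        push_neg at h
        have : (5 : ℝ) ≤ r := by exact_mod_cast h
        linarith
      have hcond : r = 3 ∨ r = 4 := by omega
      right
      rw [if_pos hcond]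
      refine ⟨fun i => 2 * x i, fun i => ?_, ?_⟩
      · rcases hx i with h | h <;> simp only [h] <;> norm_num
      · rw [sum_single]
        funext i
        show x i = (1/2 : ℝ) * (2 * x i)
        ring
  · intro h
    rcases h with ((rfl | h) | h) | h
    · exact ⟨AddSubgroup.zero_mem _, zero_mem_delta r (by omega)⟩
    · obtain ⟨i, j, ε, δ, hij, hε, hδ, rfl⟩ := h
      exact ⟨AddSubgroup.add_mem _ (smul_b_mem_M r i ε hε) (smul_b_mem_M r j δ hδ),
        root_mem r i j ε δ hij hε hδ⟩
    · obtain ⟨i, rfl | rfl⟩ := h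
      · refine ⟨?_, ?_⟩
        · exact AddSubgroup.subset_closure (Or.inl ⟨i, rfl⟩)
        · simpa using ei_mem r (by omega) i 1 (Or.inl rfl)
      · refine ⟨?_, ?_⟩
        · exact AddSubgroup.neg_mem _ (AddSubgroup.subset_closure (Or.inl ⟨i, rfl⟩))
        · have := ei_mem r (by omega) i (-1) (Or.inr rfl)
          rwa [neg_smul, one_smul] at this
    · by_cases hcond : r = 3 ∨ r = 4
      · rw [if_pos hcond] at h
        obtain ⟨ε, hε, rfl⟩ := h
        constructor
        · rw [sum_single]
          refine (mem_MBD_iff r _).2 (Or.inr fun i => ?_)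
          rcases hε i with h | h
          · exact ⟨0, by show (1/2 : ℝ) * ε i = _; rw [h]; norm_num⟩
          · exact ⟨-1, by show (1/2 : ℝ) * ε i = _; rw [h]; push_cast; norm_num⟩
        · rcases hcond with rfl | rfl
          · exact half3 ε hε
          · exact half4 ε hε
      · rw [if_neg hcond] at h
        exact absurd h (Set.notMem_empty _)
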